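/- Let ρ, t, z be real numbers satisfying 2 ≤ ρ ≤ 3, 0 ≤ z ≤ ρ·t²/3, and 1/3 ≤ t ≤ 1/ρ. Then (√ρ + t·√ρ + 2/√ρ + 1.5·z/(t·√ρ)) / (2·(√(t − z) + √z + √(1 − t))) ≤ (3 + ρ)/(2 + 2·√(ρ − 1)). -/
import Mathlib

theorem keyF (X Y a : ℝ) (hX0 : 0 < X) (hX1 : X ≤ 1) (hY0 : 0 < Y)
    (ha1 : 1 ≤ a) (haY : a ≤ Y) (hY2 : Y^2 ≤ 2*X^2)
    (ha2 : a^2 = X^2 + Y^2 - 1) (hs3 : X^2 + Y^2 ≤ 3) :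
    (2*X^2 + Y^2 + 2)*(1+a) ≤ (X^2 + Y^2 + 3)*(X+Y) := by
  have hG : 0 ≤ (1+a)*(1+X)*(Y+a) - (X^2+Y^2+3)*(Y+a-1-X) := by
    nlinarith [sq_nonneg (X-1), sq_nonneg (Y-a), mul_pos hX0 hY0, sq_nonneg (Y-1), sq_nonneg (a-1), mul_nonneg (le_of_lt hX0) (sub_nonneg.2 haY)]
  nlinarith [mul_nonneg (sub_nonneg.2 hX1) hG, mul_pos hY0 (by linarith : (0:ℝ) < Y + a)]

theorem key1lem (s u v a : ℝ) (hs0 : 0 < s) (hu0 : 0 < u) (hv0 : 0 < v)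
    (huv : u^2 + v^2 = 1) (hsu : s*u ≤ 1) (ha1 : 1 ≤ a) (ha2 : a^2 = s^2 - 1)
    (hs3 : s^2 ≤ 3) (hu13 : 1/3 ≤ u^2) :
    (s + u^2*s + 2/s) * (2+2*a) ≤ (3+s^2)*(2*(u+v)) := by
  have hX0 : 0 < s*u := mul_pos hs0 hu0
  have hY0 : 0 < s*v := mul_pos hs0 hv0
  have haY : a ≤ s*v := by nlinarith [hX0, hY0, ha1]
  have hY2 : (s*v)^2 ≤ 2*(s*u)^2 := by nlinarith [sq_nonneg s]
  have ha2' : a^2 = (s*u)^2 + (s*v)^2 - 1 := by linear_combination ha2 - s^2 * huv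
  have hs3' : (s*u)^2 + (s*v)^2 ≤ 3 := by
    have : (s*u)^2 + (s*v)^2 = s^2 := by linear_combination s^2 * huv
    linarith
  have hF := keyF (s*u) (s*v) a hX0 hsu hY0 ha1 haY hY2 ha2' hs3'
  have hdiv : (2/s)*s = 2 := div_mul_cancel₀ 2 hs0.ne'
  have expand' : ((3+s^2)*(2*(u+v)) - (s + u^2*s + 2/s)*(2+2*a)) * s
      = 2*(((s*u)^2 + (s*v)^2 + 3)*(s*u+s*v) - (2*(s*u)^2 + (s*v)^2 + 2)*(1+a)) := by
    linear_combination (-(2+2*a))*hdiv + ((2+2*a)*s^2 - 2*s^3*(u+v))*huv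
  have h0 : 0 ≤ ((3+s^2)*(2*(u+v)) - (s + u^2*s + 2/s)*(2+2*a)) * s := by
    rw [expand']; linarith
  nlinarith [h0, hs0]

theorem key2lem (s u w r a : ℝ) (hs0 : 0 < s) (hu0 : 0 < u) (hw0 : 0 ≤ w) (hr0 : 0 ≤ r)
    (ha1 : 1 ≤ a) (ha32 : a ≤ 3/2)
    (hrw : r^2 + w^2 = u^2) (hw3 : 3*w^2 ≤ s^2*u^4) (hsu : s*u ≤ 1) (hs2 : 2 ≤ s^2) :
    (1.5*w^2/(u^2*s)) * (2+2*a) ≤ (3+s^2)*(2*(r+w-u)) := by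
  have hsu2 : s^2*u^2 ≤ 1 := by nlinarith [mul_pos hs0 hu0]
  have hwu : w ≤ u := by nlinarith [mul_pos hs0 hu0, sq_nonneg u]
  have hru : r ≤ u := by nlinarith [sq_nonneg w]
  have h5w : 5*w ≤ 3*(s*u^2) := by nlinarith [mul_pos hs0 (mul_pos hu0 hu0), sq_nonneg u]
  have h5r : 4*u ≤ 5*r := by nlinarith [sq_nonneg u]
  -- core polynomial inequality
  have P : 3*w^2*(1+a)*(r+w+u) ≤ 4*(r*w)*(3+s^2)*(u^2*s) := by
    have h1 : 3*w^2*(1+a)*(r+w+u) ≤ (45/2)*(w^2*u) := by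
      nlinarith [sq_nonneg w, mul_nonneg (sq_nonneg w) (by linarith : (0:ℝ) ≤ 3*u - (r+w+u)), mul_nonneg (sq_nonneg w) (mul_nonneg (by linarith : (0:ℝ) ≤ r+w+u) (by linarith : (0:ℝ) ≤ 3/2 - a))]
    have h2 : (45/2)*(w^2*u) ≤ (27/2)*(s*w*u^3) := by
      nlinarith [mul_nonneg (mul_nonneg hw0 hu0.le) (by linarith : (0:ℝ) ≤ 3*(s*u^2) - 5*w)]
    have h3 : (27/2)*(s*w*u^3) ≤ 4*(r*w)*(3+s^2)*(u^2*s) := by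
      nlinarith [mul_nonneg (mul_nonneg (mul_nonneg hw0 (mul_nonneg hu0.le hu0.le)) hs0.le) (by linarith : (0:ℝ) ≤ 5*r - 4*u), mul_nonneg (mul_nonneg (mul_nonneg hr0 hw0) (mul_nonneg hu0.le hu0.le)) hs0.le]
    linarith
  have hsum : (0:ℝ) < r+w+u := by linarith
  have hfac : (2*(3+s^2)*(r+w-u)*(u^2*s))*(r+w+u) = 4*(r*w)*(3+s^2)*(u^2*s) := by
    linear_combination (2*(3+s^2)*(u^2*s)) * hrw
  have h : 3*w^2*(1+a) ≤ 2*(3+s^2)*(r+w-u)*(u^2*s) := by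
    have hmul : (3*w^2*(1+a))*(r+w+u) ≤ (2*(3+s^2)*(r+w-u)*(u^2*s))*(r+w+u) := by
      rw [hfac]; linarith [P]
    exact le_of_mul_le_mul_right hmul hsum
  have hus : (0:ℝ) < u^2*s := by positivity
  rw [div_mul_eq_mul_div, div_le_iff₀ hus]
  nlinarith [h]

theorem case1_factor_bound_rho_ge_two
    (ρ t z : ℝ)
    (hρ1 : 2 ≤ ρ) (hρ2 : ρ ≤ 3)
    (hz1 : 0 ≤ z) (hz2 : z ≤ ρ * t ^ 2 / 3)
    (ht1 : 1 / 3 ≤ t) (ht2 : t ≤ 1 / ρ) :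
    (Real.sqrt ρ + t * Real.sqrt ρ + 2 / Real.sqrt ρ + 1.5 * z / (t * Real.sqrt ρ))
      / (2 * (Real.sqrt (t - z) + Real.sqrt z + Real.sqrt (1 - t)))
      ≤ (3 + ρ) / (2 + 2 * Real.sqrt (ρ - 1)) := by
  have hρ0 : (0:ℝ) < ρ := by linarith
  have ht0 : (0:ℝ) < t := by linarith
  have hρt : ρ * t ≤ 1 := by
    have := (le_div_iff₀ hρ0).mp ht2
    linarith
  have ht12 : t ≤ 1/2 := by nlinarith
  have htz : z ≤ t := by nlinarith
  set s := Real.sqrt ρ with hsdef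
  set a := Real.sqrt (ρ - 1) with hadef
  set u := Real.sqrt t with hudef
  set v := Real.sqrt (1 - t) with hvdef
  set w := Real.sqrt z with hwdef
  set r := Real.sqrt (t - z) with hrdef
  have hs2 : s^2 = ρ := Real.sq_sqrt hρ0.le
  have hs0 : 0 < s := Real.sqrt_pos.2 hρ0
  have ha2 : a^2 = ρ - 1 := Real.sq_sqrt (by linarith)
  have ha0 : 0 ≤ a := Real.sqrt_nonneg _
  have ha1 : 1 ≤ a := by nlinarith
  have ha32 : a ≤ 3/2 := by nlinarith
  have hu2 : u^2 = t := Real.sq_sqrt ht0.le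
  have hu0 : 0 < u := Real.sqrt_pos.2 ht0
  have hv2 : v^2 = 1 - t := Real.sq_sqrt (by linarith)
  have hv0 : 0 < v := Real.sqrt_pos.2 (by linarith)
  have hw2 : w^2 = z := Real.sq_sqrt hz1
  have hw0 : 0 ≤ w := Real.sqrt_nonneg _
  have hr2 : r^2 = t - z := Real.sq_sqrt (by linarith)
  have hr0 : 0 ≤ r := Real.sqrt_nonneg _
  have hsu : s*u ≤ 1 := by nlinarith [mul_pos hs0 hu0]
  have huv : u^2 + v^2 = 1 := by rw [hu2, hv2]; ring
  have ha2' : a^2 = s^2 - 1 := by rw [ha2, hs2]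
  have hs3 : s^2 ≤ 3 := by rw [hs2]; exact hρ2
  have hss2 : 2 ≤ s^2 := by rw [hs2]; exact hρ1
  have hu13 : 1/3 ≤ u^2 := by rw [hu2]; exact ht1
  have hrw : r^2 + w^2 = u^2 := by rw [hr2, hw2, hu2]; ring
  have hw3 : 3*w^2 ≤ s^2*u^4 := by
    have : u^4 = t^2 := by rw [show u^4 = (u^2)^2 by ring, hu2]
    rw [hw2, hs2, this]; linarith
  have key1 := key1lem s u v a hs0 hu0 hv0 huv hsu ha1 ha2' hs3 hu13
  have key2 := key2lem s u w r a hs0 hu0 hw0 hr0 ha1 ha32 hrw hw3 hsu hss2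
  have hD : (0:ℝ) < 2*(r+w+v) := by linarith
  have hC : (0:ℝ) < 2+2*a := by linarith
  rw [div_le_div_iff₀ hD hC]
  have e3 : (3:ℝ) + ρ = 3 + s^2 := by rw [hs2]
  rw [e3, ← hu2, ← hw2]
  linarith [key1, key2]
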